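/- For z on the unit circle, the local Dirichlet integral of the atomic singular inner function S(w) = exp(-a(1+w)/(1-w)) satisfies D_z(S) = 2a/|1 - z|², and for B_n(w) = ((r - w)/(1 - rw))ⁿ with r = 1 - a/n, one has D_z(B_n) = n(1 - r²)/|1 - rz|² ≤ 4·D_z(S), and D_z(B_n) → D_z(S) as n → ∞. -/

import Mathlib

open MeasureTheory Filter

/-- For z on the unit circle, z ≠ 1: the local Dirichlet integral of
S(w) = exp(-a(1+w)/(1-w)) is D_z(S) = 2a/|1-z|²; for Bₙ with n-fold zero at
r = 1 - a/n one has D_z(Bₙ) = n(1-r²)/|1-rz|² ≤ 4 D_z(S), and D_z(Bₙ) → D_z(S). -/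
theorem stmt7 (a : ℝ) (ha : 0 < a) (z : ℂ) (hz : ‖z‖ = 1) (hz1 : z ≠ 1) :
    (∫ w, 2 / ‖z - w‖ ^ 2
        ∂((ENNReal.ofReal a) • MeasureTheory.Measure.dirac (1 : ℂ))) =
      2 * a / ‖1 - z‖ ^ 2 ∧
    (∀ n : ℕ, 0 < 1 - a / n →
      (n : ℝ) * (1 - (1 - a / n) ^ 2) / ‖1 - ((1 - a / n : ℝ) : ℂ) * z‖ ^ 2 ≤
        4 * (2 * a / ‖1 - z‖ ^ 2)) ∧
    Tendsto
      (fun n : ℕ =>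
        (n : ℝ) * (1 - (1 - a / n) ^ 2) / ‖1 - ((1 - a / n : ℝ) : ℂ) * z‖ ^ 2)
      atTop (nhds (2 * a / ‖1 - z‖ ^ 2)) := by
  have hone : (1 : ℂ) - z ≠ 0 := sub_ne_zero.mpr (Ne.symm hz1)
  have habs : 0 < ‖1 - z‖ := by
    simpa [norm_pos_iff] using hone
  have habs2 : 0 < ‖1 - z‖ ^ 2 := by positivity
  -- key estimates for part 2
  have key : ∀ r : ℝ, 0 ≤ r → r < 1 →
      ‖1 - z‖ ≤ 2 * ‖1 - (r : ℂ) * z‖ := by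
    intro r hr0 hr1
    have h1 : ‖(r : ℂ) * z‖ = r := by
      simp [norm_mul, hz, abs_of_nonneg hr0]
    have h2 : 1 - r ≤ ‖1 - (r : ℂ) * z‖ := by
      have h := norm_add_le (1 - (r : ℂ) * z) ((r : ℂ) * z)
      simp only [sub_add_cancel, norm_one, h1] at h
      linarith
    have h3 : ‖1 - z‖ ≤ ‖1 - (r : ℂ) * z‖ + (1 - r) := by
      have : (1 : ℂ) - z = (1 - (r : ℂ) * z) + ((r : ℂ) - 1) * z := by ring
      calc ‖1 - z‖
          ≤ ‖1 - (r : ℂ) * z‖ + ‖((r : ℂ) - 1) * z‖ := by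
            rw [this]; exact norm_add_le _ _
        _ = ‖1 - (r : ℂ) * z‖ + (1 - r) := by
            rw [norm_mul, hz, mul_one, ← Complex.ofReal_one, ← Complex.ofReal_sub,
              Complex.norm_real, Real.norm_eq_abs, abs_of_nonpos (by linarith)]
            ring
    linarith
  refine ⟨?_, ?_, ?_⟩
  · rw [integral_smul_measure, integral_dirac, ENNReal.toReal_ofReal ha.le]
    have : ‖z - 1‖ = ‖1 - z‖ := by
      rw [← norm_neg]; ring_nf
    rw [this]; simp; ring
  · intro n hn
    rcases Nat.eq_zero_or_pos n with hn0 | hn0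
    · subst hn0
      simp only [Nat.cast_zero, zero_mul, zero_div]
      positivity
    have hnR : (0 : ℝ) < n := Nat.cast_pos.mpr hn0
    set r : ℝ := 1 - a / n with hrdef
    have hap : 0 < a / n := div_pos ha hnR
    have hr1 : r < 1 := by simp [hrdef]; linarith
    have hr0 : 0 < r := hn
    have hzr : 0 < ‖1 - (r : ℂ) * z‖ := by
      have := key r hr0.le hr1
      nlinarith
    have hnum : (n : ℝ) * (1 - r ^ 2) = a * (2 - a / n) := by
      have hc : a / (n : ℝ) * n = a := div_mul_cancel₀ a hnR.ne'
      rw [hrdef]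
      linear_combination (2 - a / (n : ℝ)) * hc
    have hnum2 : (n : ℝ) * (1 - r ^ 2) ≤ 2 * a := by
      rw [hnum]; nlinarith
    have hkey := key r hr0.le hr1
    have hsq : ‖1 - z‖ ^ 2 ≤ 4 * ‖1 - (r : ℂ) * z‖ ^ 2 := by
      nlinarith
    rw [div_le_iff₀ (by positivity)]
    have hc : 2 * a / ‖1 - z‖ ^ 2 * ‖1 - z‖ ^ 2 = 2 * a :=
      div_mul_cancel₀ _ (ne_of_gt habs2)
    have hp : 0 < 2 * a / ‖1 - z‖ ^ 2 := by positivity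
    nlinarith [mul_le_mul_of_nonneg_left hsq hp.le]
  · have hd : Tendsto (fun n : ℕ => a / n) atTop (nhds 0) :=
      tendsto_const_div_atTop_nhds_zero_nat a
    have hnum : Tendsto (fun n : ℕ => a * (2 - a / n)) atTop (nhds (2 * a)) := by
      have := (tendsto_const_nhds (x := (2:ℝ)) (f := atTop)).sub hd
      have h2 := (tendsto_const_nhds (x := a) (f := atTop)).mul this
      simpa [mul_comm] using h2
    have hden : Tendsto (fun n : ℕ => ‖1 - ((1 - a / n : ℝ) : ℂ) * z‖ ^ 2)
        atTop (nhds (‖1 - z‖ ^ 2)) := by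
      have h1 : Tendsto (fun n : ℕ => (1 - a / n : ℝ)) atTop (nhds 1) := by
        simpa using (tendsto_const_nhds (x := (1:ℝ)) (f := atTop)).sub hd
      have h2 : Tendsto (fun n : ℕ => ((1 - a / n : ℝ) : ℂ)) atTop (nhds 1) := by
        have := (Complex.continuous_ofReal.tendsto 1).comp h1
        simpa [Function.comp_def] using this
      have h3 : Tendsto (fun n : ℕ => (1 : ℂ) - ((1 - a / n : ℝ) : ℂ) * z) atTop
          (nhds (1 - z)) := by
        have := (tendsto_const_nhds (x := (1:ℂ)) (f := atTop)).sub
          (h2.mul (tendsto_const_nhds (x := z)))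
        simpa using this
      have h4 := (continuous_norm.tendsto (1 - z)).comp h3
      exact h4.pow 2
    have hmain := hnum.div hden (ne_of_gt habs2)
    apply hmain.congr'
    filter_upwards [eventually_gt_atTop 0] with n hn
    have hnR : (0 : ℝ) < n := Nat.cast_pos.mpr hn
    have hc : a / (n : ℝ) * n = a := div_mul_cancel₀ a hnR.ne'
    simp only [Pi.div_apply]
    congr 1
    linear_combination (a / (n : ℝ) - 2) * hc
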